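/- Let n ≥ 1 and 1 ≤ i ≤ n, and write I for the imaginary unit. For every subset S of {0, 1, …, n} with exactly i elements one has Re( Σ_{j ∈ S} exp(I·π·(2j − (i−1))/(n+1)) ) ≤ sin(iπ/(n+1))/sin(π/(n+1)), with equality if and only if S = {0, 1, …, i−1}. -/

import Mathlib

open Real Finset

lemma sum_filter_fin {M : Type*} [AddCommMonoid M] (n i : ℕ) (hi : i ≤ n+1) (G : ℕ → M) :
    ∑ j ∈ (Finset.univ.filter (fun j : Fin (n+1) => (j:ℕ) < i)), G (j:ℕ)
      = ∑ j ∈ Finset.range i, G j := by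
  rw [Finset.sum_filter, Fin.sum_univ_eq_sum_range (fun j => if j < i then G j else 0),
    ← Finset.sum_filter]
  congr 1
  ext x
  simp only [Finset.mem_filter, Finset.mem_range]
  omega

lemma sin_mul_sum_cos (θ : ℝ) (i : ℕ) :
    Real.sin θ * ∑ j ∈ Finset.range i, Real.cos ((2*(j:ℝ) - ((i:ℝ)-1)) * θ)
      = Real.sin (i * θ) := by
  set g : ℕ → ℝ := fun j => Real.sin ((2*(j:ℝ) - (i:ℝ)) * θ) with hg
  have key : ∀ (j : ℕ), Real.sin θ * Real.cos ((2*(j:ℝ) - ((i:ℝ)-1)) * θ)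
      = (g (j+1) - g j) / 2 := by
    intro j
    rw [hg]
    simp only
    rw [Real.sin_sub_sin]
    push_cast
    ring_nf
  rw [Finset.mul_sum]
  simp only [key]
  rw [← Finset.sum_div, Finset.sum_range_sub g, hg]
  simp only
  push_cast
  rw [show (2*(i:ℝ) - i) * θ = i * θ by ring, show (2*(0:ℝ) - i) * θ = -(i*θ) by ring,
    Real.sin_neg]
  ring

lemma cos_lt_aux (n i j : ℕ) (θ : ℝ) (hθ : 0 < θ) (hπ : ((n:ℝ)+1)*θ = π)
    (hi : 1 ≤ i) (hij : i ≤ j) (hj : j ≤ n) :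
    Real.cos ((2*(j:ℝ) - ((i:ℝ)-1)) * θ) < Real.cos (((i:ℝ)-1)*θ) := by
  have hjr : (j:ℝ) ≤ n := by exact_mod_cast hj
  have hir : (1:ℝ) ≤ i := by exact_mod_cast hi
  have hijr : (i:ℝ) ≤ j := by exact_mod_cast hij
  have s1 : 0 < Real.sin ((j:ℝ)*θ) := by
    apply Real.sin_pos_of_pos_of_lt_pi
    · nlinarith
    · nlinarith
  have s2 : 0 < Real.sin (((j:ℝ)-i+1)*θ) := by
    apply Real.sin_pos_of_pos_of_lt_pi
    · nlinarith
    · nlinarith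
  have e1 : ((((i:ℝ)-1)*θ) + ((2*(j:ℝ)-((i:ℝ)-1))*θ))/2 = (j:ℝ)*θ := by ring
  have key := Real.cos_sub_cos (((i:ℝ)-1)*θ) ((2*(j:ℝ)-((i:ℝ)-1))*θ)
  rw [e1] at key
  have e2' : ((((i:ℝ)-1)*θ) - ((2*(j:ℝ)-((i:ℝ)-1))*θ))/2 = -(((j:ℝ)-i+1)*θ) := by ring
  rw [e2', Real.sin_neg] at key
  nlinarith [mul_pos s1 s2]

lemma cos_le_aux (n i k : ℕ) (θ : ℝ) (hθ : 0 < θ) (hπ : ((n:ℝ)+1)*θ = π)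
    (hi : 1 ≤ i) (hki : k < i) (hin : i ≤ n) :
    Real.cos (((i:ℝ)-1)*θ) ≤ Real.cos ((2*(k:ℝ) - ((i:ℝ)-1)) * θ) := by
  have hkr : (k:ℝ) + 1 ≤ i := by exact_mod_cast hki
  have hir : (i:ℝ) ≤ n := by exact_mod_cast hin
  have hk0 : (0:ℝ) ≤ k := Nat.cast_nonneg k
  have s1 : 0 ≤ Real.sin ((k:ℝ)*θ) := by
    apply Real.sin_nonneg_of_nonneg_of_le_pi
    · positivity
    · nlinarith
  have s2 : 0 ≤ Real.sin (((i:ℝ)-1-k)*θ) := by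
    apply Real.sin_nonneg_of_nonneg_of_le_pi
    · nlinarith
    · nlinarith
  have key := Real.cos_sub_cos ((2*(k:ℝ)-((i:ℝ)-1))*θ) (((i:ℝ)-1)*θ)
  have e1 : (((2*(k:ℝ)-((i:ℝ)-1))*θ) + (((i:ℝ)-1)*θ))/2 = (k:ℝ)*θ := by ring
  have e2 : (((2*(k:ℝ)-((i:ℝ)-1))*θ) - (((i:ℝ)-1)*θ))/2 = -(((i:ℝ)-1-k)*θ) := by ring
  rw [e1, e2, Real.sin_neg] at key
  nlinarith [mul_nonneg s1 s2]

/-- among all `i`-element subsets `S ⊆ {0,…,n}`, the real part of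
`Σ_{j∈S} exp(Iπ(2j − (i−1))/(n+1))` is at most `sin(iπ/(n+1))/sin(π/(n+1))`,
with equality exactly for `S = {0,…,i−1}`. -/
theorem twisted_exponential_sum_max
    (n i : ℕ) (hn : 1 ≤ n) (hi : 1 ≤ i) (hin : i ≤ n)
    (S : Finset (Fin (n + 1))) (hS : S.card = i) :
    (∑ j ∈ S, Complex.exp (Complex.I * π * (2 * (j : ℕ) - ((i : ℂ) - 1)) / (n + 1))).re ≤
      Real.sin (i * π / (n + 1)) / Real.sin (π / (n + 1)) ∧
    ((∑ j ∈ S, Complex.exp (Complex.I * π * (2 * (j : ℕ) - ((i : ℂ) - 1)) / (n + 1))).re =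
        Real.sin (i * π / (n + 1)) / Real.sin (π / (n + 1)) ↔
      S = Finset.univ.filter (fun j : Fin (n + 1) => (j : ℕ) < i)) := by
  classical
  set θ : ℝ := π / ((n:ℝ) + 1) with hθdef
  have hn1 : (0:ℝ) < (n:ℝ) + 1 := by positivity
  have hθ : 0 < θ := by rw [hθdef]; positivity
  have hπ : ((n:ℝ)+1) * θ = π := by rw [hθdef]; field_simp
  set F : ℕ → ℝ := fun j => Real.cos ((2*(j:ℝ) - ((i:ℝ)-1)) * θ) with hF
  set T : Finset (Fin (n+1)) := Finset.univ.filter (fun j : Fin (n + 1) => (j : ℕ) < i)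
    with hTdef
  have hTcard : T.card = i := by
    rw [hTdef, Finset.card_eq_sum_ones, sum_filter_fin n i (by omega) (fun _ => 1)]
    simp
  -- real parts
  have hre : ∀ (U : Finset (Fin (n+1))),
      (∑ j ∈ U, Complex.exp (Complex.I * π * (2 * (j : ℕ) - ((i : ℂ) - 1)) / (n + 1))).re
        = ∑ j ∈ U, F (j:ℕ) := by
    intro U
    rw [Complex.re_sum]
    refine Finset.sum_congr rfl fun j _ => ?_
    have : Complex.I * π * (2 * ((j:ℕ):ℂ) - ((i : ℂ) - 1)) / (n + 1)
        = (((2*((j:ℕ):ℝ) - ((i:ℝ)-1)) * θ : ℝ) : ℂ) * Complex.I := by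
      rw [hθdef]
      have : ((n:ℂ) + 1) ≠ 0 := by
        exact_mod_cast (show ((n:ℝ)+1) ≠ 0 from ne_of_gt hn1)
      push_cast
      field_simp
    rw [this, Complex.exp_ofReal_mul_I_re]
  -- value on T
  have hsinθ : 0 < Real.sin θ := by
    apply Real.sin_pos_of_pos_of_lt_pi hθ
    have hnr : (1:ℝ) ≤ (n:ℝ) := by exact_mod_cast hn
    nlinarith [mul_le_mul_of_nonneg_right hnr hθ.le]
  have hT : ∑ j ∈ T, F (j:ℕ) = Real.sin (i * π / (n + 1)) / Real.sin (π / (n + 1)) := by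
    rw [hTdef, sum_filter_fin n i (by omega) F]
    have hs := sin_mul_sum_cos θ i
    rw [eq_div_iff (ne_of_gt (by rw [← hθdef] at *; exact hsinθ))]
    rw [show (i:ℝ) * π / ((n:ℝ)+1) = (i:ℝ) * θ by rw [hθdef]; ring]
    rw [hF]
    rw [← hθdef]
    linarith [hs]
  -- strict inequality when S ≠ T
  have hstrict : S ≠ T → ∑ j ∈ S, F (j:ℕ) < ∑ j ∈ T, F (j:ℕ) := by
    intro hne
    have hsplitS := Finset.sum_inter_add_sum_sdiff S T (fun j => F (j:ℕ))
    have hsplitT := Finset.sum_inter_add_sum_sdiff T S (fun j => F (j:ℕ))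
    rw [Finset.inter_comm] at hsplitT
    have hc1 := Finset.card_inter_add_card_sdiff S T
    have hc2 := Finset.card_inter_add_card_sdiff T S
    rw [Finset.inter_comm T S] at hc2
    have hcards : (S \ T).card = (T \ S).card := by omega
    have hne' : (S \ T).Nonempty := by
      rw [Finset.sdiff_nonempty]
      intro hsub
      exact hne (Finset.eq_of_subset_of_card_le hsub (by omega))
    set c : ℝ := Real.cos (((i:ℝ)-1)*θ) with hc
    have h1 : ∑ j ∈ S \ T, F (j:ℕ) < (S \ T).card • c := by
      rw [← Finset.sum_const]
      apply Finset.sum_lt_sum_of_nonempty hne'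
      intro j hj
      rw [Finset.mem_sdiff, hTdef, Finset.mem_filter] at hj
      have hij : i ≤ (j:ℕ) := by
        by_contra h
        exact hj.2 ⟨Finset.mem_univ j, by omega⟩
      exact cos_lt_aux n i (j:ℕ) θ hθ hπ hi hij (by omega) 
    have h2 : (T \ S).card • c ≤ ∑ j ∈ T \ S, F (j:ℕ) := by
      rw [← Finset.sum_const]
      apply Finset.sum_le_sum
      intro j hj
      rw [Finset.mem_sdiff, hTdef, Finset.mem_filter] at hj
      exact cos_le_aux n i (j:ℕ) θ hθ hπ hi hj.1.2 hin
    rw [hcards] at h1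
    linarith
  constructor
  · rw [hre S, ← hT]
    rcases eq_or_ne S T with h | h
    · rw [h]
    · exact (hstrict h).le
  · constructor
    · intro heq
      by_contra h
      have := hstrict h
      rw [hre S, ← hT] at heq
      linarith
    · intro h
      rw [h, hre T, hT]
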